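/- For every natural number g ≥ 1, Σ_{m ≥ 1, m odd} C(2g+2, g+1−2m) = 2^(2g−1) − 2^(g−1), where the sum runs over odd m with 1 ≤ m ≤ ⌊(g+1)/2⌋. -/

import Mathlib

open Finset

namespace PCO

abbrev ZI := Zsqrtd (-1)

noncomputable def I : ZI := Zsqrtd.sqrtd

def r (j : ℕ) : ℤ := if j % 4 = 0 then 1 else if j % 4 = 2 then -1 else 0
def s (j : ℕ) : ℤ := if j % 4 = 1 then 1 else if j % 4 = 3 then -1 else 0

lemma i_pow (j : ℕ) : (I ^ j).re = r j ∧ (I ^ j).im = s j := by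
  induction j with
  | zero => simp [r, s]
  | succ j ih =>
    have h4 : j % 4 = 0 ∨ j % 4 = 1 ∨ j % 4 = 2 ∨ j % 4 = 3 := by omega
    rw [pow_succ, Zsqrtd.re_mul, Zsqrtd.im_mul, ih.1, ih.2]
    simp only [I, Zsqrtd.re_sqrtd, Zsqrtd.im_sqrtd]
    rcases h4 with h | h | h | h <;>
      simp [r, s, Nat.add_mod, h]

lemma r_two_mul (t : ℕ) : r (2 * t) = (-1 : ℤ) ^ t := by
  rcases Nat.even_or_odd t with ⟨u, hu⟩ | ⟨u, hu⟩
  · have h0 : (2 * t) % 4 = 0 := by omega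
    rw [Even.neg_one_pow (⟨u, hu⟩ : Even t)]
    simp [r, h0]
  · have h1 : (2 * t) % 4 = 2 := by omega
    rw [Odd.neg_one_pow (⟨u, hu⟩ : Odd t)]
    simp [r, h1]

lemma r_odd (j : ℕ) (h : j % 2 = 1) : r j = 0 := by
  have : j % 4 = 1 ∨ j % 4 = 3 := by omega
  rcases this with h | h <;> simp [r, h]

lemma sum_reflect (g : ℕ) (f : ℕ → ℤ) :
    ∑ k ∈ range (2 * g + 3), f k
      = f (g + 1) + ∑ k ∈ range (g + 1), (f k + f (2 * g + 2 - k)) := by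
  have h1 : ∑ k ∈ Ico 0 (g + 2), f k + ∑ k ∈ Ico (g + 2) (2 * g + 3), f k
      = ∑ k ∈ Ico 0 (2 * g + 3), f k :=
    Finset.sum_Ico_consecutive f (by omega) (by omega)
  have h2 : ∑ k ∈ Ico (g + 2) (2 * g + 3), f k
      = ∑ k ∈ range (2 * g + 3 - (g + 2)), f (g + 2 + k) :=
    Finset.sum_Ico_eq_sum_range f _ _
  have h3 : (2 * g + 3 - (g + 2)) = g + 1 := by omega
  have h4 : ∑ k ∈ range (g + 1), f (g + 2 + (g + 1 - 1 - k))
      = ∑ k ∈ range (g + 1), f (g + 2 + k) :=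
    Finset.sum_range_reflect (fun k => f (g + 2 + k)) (g + 1)
  have h5 : ∑ k ∈ range (g + 1), f (g + 2 + (g + 1 - 1 - k))
      = ∑ k ∈ range (g + 1), f (2 * g + 2 - k) := by
    apply Finset.sum_congr rfl
    intro k hk
    simp only [Finset.mem_range] at hk
    congr 1
    omega
  rw [← Finset.range_eq_Ico] at h1
  rw [Finset.sum_range_succ] at h1
  rw [Finset.sum_add_distrib, Finset.range_eq_Ico, ← h1, h2, h3, ← h4, h5]
  ring

lemma sum_parity (g : ℕ) (f : ℕ → ℤ)
    (hf : ∀ k, k < g + 1 → (g + 1 + k) % 2 = 1 → f k = 0) :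
    ∑ k ∈ range (g + 1), f k = ∑ m ∈ Icc 1 ((g + 1) / 2), f (g + 1 - 2 * m) := by
  have h1 : ∑ k ∈ (range (g + 1)).filter (fun k => (g + 1 + k) % 2 = 0), f k
      = ∑ k ∈ range (g + 1), f k := by
    apply Finset.sum_filter_of_ne
    intro k hk' hk
    simp only [Finset.mem_range] at hk'
    by_contra h
    exact hk (hf k hk' (by omega))
  rw [← h1]
  refine (Finset.sum_nbij' (fun m => g + 1 - 2 * m) (fun k => (g + 1 - k) / 2)
    ?_ ?_ ?_ ?_ ?_).symm
  · intro m hm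
    simp only [Finset.mem_Icc] at hm
    simp only [Finset.mem_filter, Finset.mem_range]
    omega
  · intro k hk
    simp only [Finset.mem_filter, Finset.mem_range] at hk
    simp only [Finset.mem_Icc]
    omega
  · intro m hm
    simp only [Finset.mem_Icc] at hm
    omega
  · intro k hk
    simp only [Finset.mem_filter, Finset.mem_range] at hk
    omega
  · intro m _
    rfl

/-- Combined reindexing: for f supported on the parity class of `g+1`. -/
lemma sum_reindex (g : ℕ) (f : ℕ → ℤ)
    (hf : ∀ k, k < 2 * g + 3 → (g + 1 + k) % 2 = 1 → f k = 0) :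
    ∑ k ∈ range (2 * g + 3), f k
      = f (g + 1) + ∑ m ∈ Icc 1 ((g + 1) / 2), (f (g + 1 - 2 * m) + f (g + 1 + 2 * m)) := by
  rw [sum_reflect, Finset.sum_add_distrib, Finset.sum_add_distrib]
  congr 1
  congr 1
  · exact sum_parity g f (fun k hk h => hf k (by omega) h)
  · have h := sum_parity g (fun k => f (2 * g + 2 - k)) (by
      intro k hk hp
      apply hf (2 * g + 2 - k) (by omega)
      omega)
    rw [h]
    apply Finset.sum_congr rfl
    intro m hm
    simp only [Finset.mem_Icc] at hm
    rw [show 2 * g + 2 - (g + 1 - 2 * m) = g + 1 + 2 * m from by omega]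


lemma cast_sum_choose (g : ℕ) :
    ∑ k ∈ range (2 * g + 3), ((2 * g + 2).choose k : ℤ) = 2 ^ (2 * g + 2) := by
  have h := Nat.sum_range_choose (2 * g + 2)
  have h2 : (2 * g + 2) + 1 = 2 * g + 3 := rfl
  rw [h2] at h
  calc ∑ k ∈ range (2 * g + 3), ((2 * g + 2).choose k : ℤ)
      = ((∑ k ∈ range (2 * g + 3), (2 * g + 2).choose k : ℕ) : ℤ) := by push_cast; rfl
    _ = 2 ^ (2 * g + 2) := by rw [h]; push_cast; rfl

lemma choose_symm' (g m : ℕ) (hm : 2 * m ≤ g + 1) :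
    (2 * g + 2).choose (g + 1 + 2 * m) = (2 * g + 2).choose (g + 1 - 2 * m) := by
  have h := Nat.choose_symm (n := 2 * g + 2) (k := g + 1 + 2 * m) (by omega)
  rw [show 2 * g + 2 - (g + 1 + 2 * m) = g + 1 - 2 * m from by omega] at h
  exact h.symm

lemma eqA (g : ℕ) :
    ((2 * g + 2).choose (g + 1) : ℤ)
      + 2 * ∑ m ∈ Icc 1 ((g + 1) / 2), ((2 * g + 2).choose (g + 1 - 2 * m) : ℤ)
      = 2 ^ (2 * g + 1) := by
  set fA : ℕ → ℤ := fun k =>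
    if (g + 1 + k) % 2 = 0 then ((2 * g + 2).choose k : ℤ) else 0 with hfA
  have hsupp : ∀ k, k < 2 * g + 3 → (g + 1 + k) % 2 = 1 → fA k = 0 := by
    intro k _ h
    simp only [hfA]
    rw [if_neg (by omega)]
  have step1 : 2 * ∑ k ∈ range (2 * g + 3), fA k = 2 ^ (2 * g + 2) := by
    have hpt : ∀ k, 2 * fA k
        = ((2 * g + 2).choose k : ℤ)
          + (-1) ^ (g + 1) * ((-1) ^ k * ((2 * g + 2).choose k : ℤ)) := by
      intro k
      have hps : (-1 : ℤ) ^ (g + 1) * (-1) ^ k = (-1) ^ (g + 1 + k) := (pow_add _ _ _).symm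
      rcases Nat.even_or_odd (g + 1 + k) with ⟨u, hu⟩ | ⟨u, hu⟩
      · have h0 : (g + 1 + k) % 2 = 0 := by omega
        have h1 : (-1 : ℤ) ^ (g + 1 + k) = 1 := Even.neg_one_pow ⟨u, hu⟩
        simp only [hfA, if_pos h0]
        rw [← mul_assoc, hps, h1]
        ring
      · have h0 : ¬ (g + 1 + k) % 2 = 0 := by omega
        have h1 : (-1 : ℤ) ^ (g + 1 + k) = -1 := Odd.neg_one_pow ⟨u, hu⟩
        simp only [hfA, if_neg h0]
        rw [← mul_assoc, hps, h1]
        ring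
    rw [Finset.mul_sum]
    calc ∑ k ∈ range (2 * g + 3), 2 * fA k
        = ∑ k ∈ range (2 * g + 3), (((2 * g + 2).choose k : ℤ)
            + (-1) ^ (g + 1) * ((-1) ^ k * ((2 * g + 2).choose k : ℤ))) :=
          Finset.sum_congr rfl fun k _ => hpt k
      _ = (∑ k ∈ range (2 * g + 3), ((2 * g + 2).choose k : ℤ))
            + (-1) ^ (g + 1) * ∑ k ∈ range (2 * g + 3), ((-1) ^ k * ((2 * g + 2).choose k : ℤ)) := by
          rw [Finset.sum_add_distrib, Finset.mul_sum]
      _ = 2 ^ (2 * g + 2) := by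
          rw [cast_sum_choose, Int.alternating_sum_range_choose_of_ne (by omega)]
          try ring
  have step2 := sum_reindex g fA hsupp
  have hg1 : fA (g + 1) = ((2 * g + 2).choose (g + 1) : ℤ) := by
    simp only [hfA]; rw [if_pos (by omega)]
  have hterm : ∀ m ∈ Icc 1 ((g + 1) / 2),
      fA (g + 1 - 2 * m) + fA (g + 1 + 2 * m)
        = 2 * ((2 * g + 2).choose (g + 1 - 2 * m) : ℤ) := by
    intro m hm
    simp only [Finset.mem_Icc] at hm
    have h2m : 2 * m ≤ g + 1 := by omega
    simp only [hfA]
    rw [if_pos (by omega), if_pos (by omega), choose_symm' g m h2m]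
    ring
  rw [Finset.sum_congr rfl hterm] at step2
  rw [step2, hg1] at step1
  have h2 : ∑ x ∈ Icc 1 ((g + 1) / 2), 2 * ((2 * g + 2).choose (g + 1 - 2 * x) : ℤ)
      = 2 * ∑ x ∈ Icc 1 ((g + 1) / 2), ((2 * g + 2).choose (g + 1 - 2 * x) : ℤ) :=
    (Finset.mul_sum _ _ _).symm
  rw [h2] at step1
  have hp : (2 : ℤ) ^ (2 * g + 2) = 2 ^ (2 * g + 1) * 2 := pow_succ 2 (2 * g + 1)
  linarith [step1, hp]

def reHom : ZI →+ ℤ where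
  toFun := Zsqrtd.re
  map_zero' := rfl
  map_add' := fun _ _ => rfl

lemma gauss (g : ℕ) :
    ∑ k ∈ range (2 * g + 3), ((2 * g + 2).choose k : ℤ) * r (g + 1 + k)
      = (-2) ^ (g + 1) := by
  have hI : I * I = -1 := by
    ext
    · simp [I, Zsqrtd.re_mul]
    · simp [I, Zsqrtd.im_mul]
  have h2 : (I + 1) ^ 2 = 2 * I := by
    calc (I + 1) ^ 2 = I * I + 2 * I + 1 := by ring
      _ = 2 * I := by rw [hI]; ring
  have hz : ∑ k ∈ range (2 * g + 3), ((2 * g + 2).choose k : ZI) * I ^ (g + 1 + k)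
      = (-2 : ZI) ^ (g + 1) := by
    have hap := add_pow I 1 (2 * g + 2)
    simp only [one_pow, mul_one] at hap
    have key : I ^ (g + 1) * (I + 1) ^ (2 * g + 2) = (-2 : ZI) ^ (g + 1) := by
      have hm : I * (2 * I) = (-2 : ZI) := by
        rw [show I * (2 * I) = 2 * (I * I) from by ring, hI]
        try ring
        try norm_num
      rw [show (2 : ℕ) * g + 2 = 2 * (g + 1) from by ring, pow_mul, h2, ← mul_pow, hm]
    rw [hap, Finset.mul_sum] at key
    rw [← key]
    apply Finset.sum_congr rfl
    intro k _
    rw [pow_add]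
    ring
  have := congrArg reHom hz
  rw [map_sum] at this
  have hterm : ∀ k, reHom (((2 * g + 2).choose k : ZI) * I ^ (g + 1 + k))
      = ((2 * g + 2).choose k : ℤ) * r (g + 1 + k) := by
    intro k
    show (((2 * g + 2).choose k : ZI) * I ^ (g + 1 + k)).re = _
    rw [Zsqrtd.re_mul, Zsqrtd.re_natCast, Zsqrtd.im_natCast, (i_pow (g + 1 + k)).1,
      (i_pow (g + 1 + k)).2]
    ring
  rw [Finset.sum_congr rfl (fun k _ => hterm k)] at this
  rw [this]
  show ((-2 : ZI) ^ (g + 1)).re = _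
  rw [show (-2 : ZI) = ((-2 : ℤ) : ZI) from by push_cast; ring, ← Int.cast_pow,
    Zsqrtd.re_intCast]

lemma eqB (g : ℕ) :
    ((2 * g + 2).choose (g + 1) : ℤ)
      + 2 * ∑ m ∈ Icc 1 ((g + 1) / 2),
          ((-1) ^ m * ((2 * g + 2).choose (g + 1 - 2 * m) : ℤ))
      = 2 ^ (g + 1) := by
  set fB : ℕ → ℤ := fun k => ((2 * g + 2).choose k : ℤ) * r (g + 1 + k) with hfB
  have hsupp : ∀ k, k < 2 * g + 3 → (g + 1 + k) % 2 = 1 → fB k = 0 := by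
    intro k _ h
    simp only [hfB]
    rw [r_odd _ h, mul_zero]
  have step2 := sum_reindex g fB hsupp
  rw [gauss g] at step2
  have hg1 : fB (g + 1) = (-1) ^ (g + 1) * ((2 * g + 2).choose (g + 1) : ℤ) := by
    simp only [hfB]
    rw [show g + 1 + (g + 1) = 2 * (g + 1) from by ring, r_two_mul]
    ring
  have hterm : ∀ m ∈ Icc 1 ((g + 1) / 2),
      fB (g + 1 - 2 * m) + fB (g + 1 + 2 * m)
        = (-1) ^ (g + 1) * (2 * ((-1) ^ m * ((2 * g + 2).choose (g + 1 - 2 * m) : ℤ))) := by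
    intro m hm
    simp only [Finset.mem_Icc] at hm
    have h2m : 2 * m ≤ g + 1 := by omega
    have e1 : g + 1 + (g + 1 - 2 * m) = 2 * (g + 1 - m) := by omega
    have e2 : g + 1 + (g + 1 + 2 * m) = 2 * (g + 1 + m) := by omega
    have e3 : (-1 : ℤ) ^ (g + 1 - m) = (-1) ^ (g + 1 + m) := by
      rw [show g + 1 + m = (g + 1 - m) + 2 * m from by omega, pow_add, pow_mul]
      simp
    have e4 : (-1 : ℤ) ^ (g + 1 + m) = (-1) ^ (g + 1) * (-1) ^ m := pow_add _ _ _
    simp only [hfB]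
    rw [e1, e2, r_two_mul, r_two_mul, e3, e4, choose_symm' g m h2m]
    ring
  rw [Finset.sum_congr rfl hterm, hg1] at step2
  have hmul : ∑ m ∈ Icc 1 ((g + 1) / 2),
      (-1 : ℤ) ^ (g + 1) * (2 * ((-1) ^ m * ((2 * g + 2).choose (g + 1 - 2 * m) : ℤ)))
      = (-1) ^ (g + 1) * (2 * ∑ m ∈ Icc 1 ((g + 1) / 2),
          (-1) ^ m * ((2 * g + 2).choose (g + 1 - 2 * m) : ℤ)) := by
    rw [Finset.mul_sum, Finset.mul_sum]
  rw [hmul] at step2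
  have hfac : (-1 : ℤ) ^ (g + 1)
      * (((2 * g + 2).choose (g + 1) : ℤ)
        + 2 * ∑ m ∈ Icc 1 ((g + 1) / 2),
            ((-1) ^ m * ((2 * g + 2).choose (g + 1 - 2 * m) : ℤ)))
      = (-1) ^ (g + 1) * 2 ^ (g + 1) := by
    rw [mul_add, ← step2, show (-2 : ℤ) = -1 * 2 from by ring, mul_pow]
  have hne : ((-1 : ℤ) ^ (g + 1)) ≠ 0 := by
    rcases Nat.even_or_odd (g + 1) with ⟨u, hu⟩ | ⟨u, hu⟩
    · rw [Even.neg_one_pow ⟨u, hu⟩]; norm_num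
    · rw [Odd.neg_one_pow ⟨u, hu⟩]; norm_num
  exact mul_left_cancel₀ hne hfac

end PCO

theorem partitions_count_odd (g : ℕ) (hg : 1 ≤ g) :
    ∑ m ∈ (Finset.Icc 1 ((g + 1) / 2)).filter (fun m => Odd m),
        Nat.choose (2 * g + 2) (g + 1 - 2 * m) =
    2 ^ (2 * g - 1) - 2 ^ (g - 1) := by
  set N : ℕ := ∑ m ∈ (Finset.Icc 1 ((g + 1) / 2)).filter (fun m => Odd m),
      Nat.choose (2 * g + 2) (g + 1 - 2 * m) with hN
  have hA := PCO.eqA g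
  have hB := PCO.eqB g
  have hS : ∑ m ∈ Icc 1 ((g + 1) / 2), ((2 * g + 2).choose (g + 1 - 2 * m) : ℤ)
      - ∑ m ∈ Icc 1 ((g + 1) / 2), ((-1) ^ m * ((2 * g + 2).choose (g + 1 - 2 * m) : ℤ))
      = 2 * (N : ℤ) := by
    rw [← Finset.sum_sub_distrib]
    have hpt : ∀ m ∈ Icc 1 ((g + 1) / 2),
        ((2 * g + 2).choose (g + 1 - 2 * m) : ℤ)
          - (-1) ^ m * ((2 * g + 2).choose (g + 1 - 2 * m) : ℤ)
        = if Odd m then 2 * ((2 * g + 2).choose (g + 1 - 2 * m) : ℤ) else 0 := by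
      intro m _
      rcases Nat.even_or_odd m with hm | hm
      · rw [Even.neg_one_pow hm, if_neg (by simpa using hm)]
        ring
      · rw [Odd.neg_one_pow hm, if_pos hm]
        ring
    rw [Finset.sum_congr rfl hpt]
    have hNc : (N : ℤ) = ∑ m ∈ (Icc 1 ((g + 1) / 2)).filter (fun m => Odd m),
        ((2 * g + 2).choose (g + 1 - 2 * m) : ℤ) := by
      rw [hN]; push_cast; rfl
    rw [hNc, Finset.sum_filter, Finset.mul_sum]
    apply Finset.sum_congr rfl
    intro m _
    split <;> ring
  have key : (4 : ℤ) * N = 2 ^ (2 * g + 1) - 2 ^ (g + 1) := by linarith [hA, hB, hS]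
  have ha : 1 ≤ 2 ^ (g - 1) := Nat.one_le_two_pow
  have e1 : (2 : ℕ) ^ (g + 1) = 4 * 2 ^ (g - 1) := by
    rw [show g + 1 = (g - 1) + 2 from by omega, pow_add]; ring
  have e2 : (2 : ℕ) ^ (2 * g + 1) = 8 * (2 ^ (g - 1) * 2 ^ (g - 1)) := by
    rw [show 2 * g + 1 = (g - 1) + ((g - 1) + 3) from by omega, pow_add, pow_add]; ring
  have e3 : (2 : ℕ) ^ (2 * g - 1) = 2 * (2 ^ (g - 1) * 2 ^ (g - 1)) := by
    rw [show 2 * g - 1 = (g - 1) + ((g - 1) + 1) from by omega, pow_add, pow_add]; ring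
  obtain ⟨b, hb⟩ : ∃ b, 2 ^ (g - 1) * 2 ^ (g - 1) = b := ⟨_, rfl⟩
  have key2 : (4 : ℤ) * N = 8 * (b : ℤ) - 4 * ((2 ^ (g - 1) : ℕ) : ℤ) := by
    rw [key,
      show ((2 : ℤ)) ^ (2 * g + 1) = (((2 ^ (2 * g + 1) : ℕ) : ℤ)) from by push_cast; rfl,
      show ((2 : ℤ)) ^ (g + 1) = (((2 ^ (g + 1) : ℕ) : ℤ)) from by push_cast; rfl,
      e1, e2, hb]
    push_cast
    ring
  have hba : 2 ^ (g - 1) ≤ b := by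
    rw [← hb]
    calc 2 ^ (g - 1) = 2 ^ (g - 1) * 1 := (mul_one _).symm
      _ ≤ 2 ^ (g - 1) * 2 ^ (g - 1) := Nat.mul_le_mul_left _ ha
  rw [e3, hb]
  omega
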